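/- Let K₁ ≥ 1 and let A be an invertible real 3×3 matrix (equivalently, an invertible linear map A : ℝ³ → ℝ³) such that ‖Av‖ ≤ K₁‖Aw‖ for all unit vectors v, w ∈ ℝ³. Then for every orthogonal projection P of ℝ³ onto a 2-dimensional linear subspace, |det A|^{2/3} ≤ K₁² ‖P ∘ A‖_F², where ‖P ∘ A‖_F² is the squared Frobenius (Hilbert–Schmidt) norm of the composition P ∘ A. -/

import Mathlib

noncomputable section

open Matrix in
/-- if the invertible 3×3 matrix A has distortion bounded by K₁, then for
every orthogonal projection P onto a 2-dimensional subspace U of ℝ³,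
|det A|^{2/3} ≤ K₁² ‖P ∘ A‖_F², where ‖P∘A‖_F² = Σ_j ‖P(A e_j)‖² is the squared
Frobenius norm of P ∘ A. -/
theorem stmt12 (K₁ : ℝ) (hK : 1 ≤ K₁) (A : Matrix (Fin 3) (Fin 3) ℝ) (hA : A.det ≠ 0)
    (hdist : ∀ v w : EuclideanSpace ℝ (Fin 3), ‖v‖ = 1 → ‖w‖ = 1 →
      ‖Matrix.toEuclideanLin A v‖ ≤ K₁ * ‖Matrix.toEuclideanLin A w‖)
    (U : Submodule ℝ (EuclideanSpace ℝ (Fin 3))) (hU : Module.finrank ℝ U = 2) :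
    |A.det| ^ ((2 : ℝ) / 3)
      ≤ K₁ ^ 2 * ∑ j : Fin 3,
          ‖(Submodule.orthogonalProjection U (Matrix.toEuclideanLin A (EuclideanSpace.single j 1))
              : EuclideanSpace ℝ (Fin 3))‖ ^ 2 := by
  classical
  set f := Matrix.toEuclideanLin A with hf
  set col : Fin 3 → EuclideanSpace ℝ (Fin 3) := fun j => f (EuclideanSpace.single j 1) with hcol
  set S := ∑ j : Fin 3, ‖(Submodule.orthogonalProjection U (col j) : EuclideanSpace ℝ (Fin 3))‖ ^ 2 with hS
  -- find a unit vector v with f v ∈ U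
  have hUne : U ≠ ⊥ := by
    intro h; rw [h] at hU; simp [finrank_bot] at hU
  obtain ⟨u, huU, hune⟩ := Submodule.exists_mem_ne_zero_of_ne_bot hUne
  have hAunit : IsUnit A.det := isUnit_iff_ne_zero.mpr hA
  set x : EuclideanSpace ℝ (Fin 3) := Matrix.toEuclideanLin A⁻¹ u with hx
  have hfx : f x = u := by
    rw [hf, hx]
    ext i
    simp [Matrix.toEuclideanLin_apply, Matrix.mulVec_mulVec, Matrix.mul_nonsing_inv _ hAunit]
  have hxne : x ≠ 0 := by
    intro h; apply hune; rw [← hfx, h, map_zero]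
  have hxnorm : (0:ℝ) < ‖x‖ := norm_pos_iff.mpr hxne
  set v : EuclideanSpace ℝ (Fin 3) := ‖x‖⁻¹ • x with hv
  have hvnorm : ‖v‖ = 1 := by
    rw [hv, norm_smul, norm_inv, norm_norm, inv_mul_cancel₀ hxnorm.ne']
  have hfvU : f v ∈ U := by
    rw [hv, _root_.map_smul, hfx]
    exact U.smul_mem _ huU
  -- Cauchy–Schwarz: ‖f v‖² ≤ S
  have hproj : (Submodule.orthogonalProjection U (f v) : EuclideanSpace ℝ (Fin 3)) = f v :=
    Submodule.starProjection_eq_self_iff.mpr hfvU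
  have hsum : ∑ j : Fin 3, v j • EuclideanSpace.single j (1:ℝ) = v := by
    have := (EuclideanSpace.basisFun (Fin 3) ℝ).sum_repr v
    simpa [EuclideanSpace.basisFun_apply, EuclideanSpace.basisFun_repr] using this
  have hvsq : ∑ j : Fin 3, (v j) ^ 2 = 1 := by
    have h := hvnorm
    rw [EuclideanSpace.norm_eq] at h
    have h2 := congrArg (· ^ 2) h
    simp only [one_pow] at h2
    rw [Real.sq_sqrt (by positivity)] at h2
    simpa [sq_abs] using h2
  have key1 : ‖f v‖ ^ 2 ≤ S := by
    have hfv : f v = ∑ j : Fin 3, v j • col j := by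
      conv_lhs => rw [← hsum]
      simp [hcol, Finset.smul_sum]
    have hPfv : (Submodule.orthogonalProjection U (f v) : EuclideanSpace ℝ (Fin 3))
        = ∑ j : Fin 3, v j • (Submodule.orthogonalProjection U (col j) : EuclideanSpace ℝ (Fin 3)) := by
      rw [hfv]
      rw [map_sum]
      push_cast
      simp
    have hnorm_le : ‖f v‖ ≤ ∑ j : Fin 3,
        |v j| * ‖(Submodule.orthogonalProjection U (col j) : EuclideanSpace ℝ (Fin 3))‖ := by
      calc ‖f v‖ = ‖(Submodule.orthogonalProjection U (f v) : EuclideanSpace ℝ (Fin 3))‖ := by rw [hproj]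
        _ ≤ ∑ j : Fin 3, ‖v j • (Submodule.orthogonalProjection U (col j) : EuclideanSpace ℝ (Fin 3))‖ := by
            rw [hPfv]; exact norm_sum_le _ _
        _ = ∑ j : Fin 3, |v j| * ‖(Submodule.orthogonalProjection U (col j) : EuclideanSpace ℝ (Fin 3))‖ := by
            simp [norm_smul]
    have hcs := Finset.sum_mul_sq_le_sq_mul_sq Finset.univ (fun j => |v j|)
      (fun j => ‖(Submodule.orthogonalProjection U (col j) : EuclideanSpace ℝ (Fin 3))‖)
    have h1 : ‖f v‖ ^ 2 ≤ (∑ j : Fin 3,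
        |v j| * ‖(Submodule.orthogonalProjection U (col j) : EuclideanSpace ℝ (Fin 3))‖) ^ 2 := by
      apply pow_le_pow_left₀ (norm_nonneg _) hnorm_le
    refine h1.trans ?_
    calc (∑ j : Fin 3, |v j| * ‖(Submodule.orthogonalProjection U (col j) : EuclideanSpace ℝ (Fin 3))‖) ^ 2
        ≤ (∑ j : Fin 3, |v j| ^ 2) * (∑ j : Fin 3,
            ‖(Submodule.orthogonalProjection U (col j) : EuclideanSpace ℝ (Fin 3))‖ ^ 2) := hcs
      _ = S := by
          rw [hS]
          simp only [sq_abs]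
          rw [hvsq, one_mul]
  -- Hadamard: |A.det| ≤ ∏ ‖col j‖
  haveI : Fact (Module.finrank ℝ (EuclideanSpace ℝ (Fin 3)) = 3) :=
    Fact.mk finrank_euclideanSpace_fin
  have key2 : |A.det| ≤ ∏ j : Fin 3, ‖col j‖ := by
    set b := EuclideanSpace.basisFun (Fin 3) ℝ with hb
    set o := b.toBasis.orientation with ho
    have h1 := o.abs_volumeForm_apply_le col
    rw [o.volumeForm_robust b rfl] at h1
    have h2 : b.toBasis.det col = A.det := by
      rw [Module.Basis.det_apply]
      congr 1
      ext i j
      rw [Module.Basis.toMatrix_apply, b.coe_toBasis_repr_apply, EuclideanSpace.basisFun_repr]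
      show (Matrix.toEuclideanLin A (EuclideanSpace.single j 1)) i = A i j
      simp [Matrix.toEuclideanLin_apply, Matrix.mulVec_single]
    rwa [h2] at h1
  -- each column bounded by K₁ ‖f v‖
  have key3 : ∀ j : Fin 3, ‖col j‖ ≤ K₁ * ‖f v‖ := fun j =>
    hdist (EuclideanSpace.single j 1) v (by simp [EuclideanSpace.norm_single]) hvnorm
  have hfvnn : (0:ℝ) ≤ K₁ * ‖f v‖ := by positivity
  have hdet3 : |A.det| ≤ (K₁ * ‖f v‖) ^ 3 := by
    refine key2.trans ?_
    calc ∏ j : Fin 3, ‖col j‖ ≤ ∏ j : Fin 3, (K₁ * ‖f v‖) :=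
          Finset.prod_le_prod (fun j _ => norm_nonneg _) (fun j _ => key3 j)
      _ = (K₁ * ‖f v‖) ^ 3 := by simp [Finset.prod_const]
  have hSnn : (0:ℝ) ≤ S := Finset.sum_nonneg fun j _ => by positivity
  calc |A.det| ^ ((2:ℝ)/3) ≤ ((K₁ * ‖f v‖) ^ 3) ^ ((2:ℝ)/3) :=
        Real.rpow_le_rpow (abs_nonneg _) hdet3 (by norm_num)
    _ = (K₁ * ‖f v‖) ^ 2 := by
        rw [← Real.rpow_natCast (K₁ * ‖f v‖) 3, ← Real.rpow_mul hfvnn]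
        norm_num

    _ = K₁ ^ 2 * ‖f v‖ ^ 2 := by ring
    _ ≤ K₁ ^ 2 * S := by
        apply mul_le_mul_of_nonneg_left key1 (by positivity)
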